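/- For each k ≥ 1, consider a probability space carrying mutually independent events R_1^k, …, R_N^k with P(R_j^k) = α_k for j ≤ m and P(R_j^k) = π_k for j > m, where m ∈ {0, 1, …, N} is fixed and α_k, π_k ∈ [0, 1]. Let m̂_k be the bottom-up estimator defined by m̂_k(ω) = (min{ j : ω ∈ R_j^k }) − 1 if ω ∈ R_j^k for some j, and m̂_k(ω) = N otherwise. If α_k → 0 and π_k → 1 as k → ∞, then P(m̂_k = m) → 1 as k → ∞. -/

import Mathlib

open MeasureTheory ProbabilityTheory Filter
open scoped Classical

noncomputable def mhat {Ω : Type*} {N : ℕ} (R : Fin N → Set Ω) (ω : Ω) : ℕ :=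
  if ∃ j : Fin N, ω ∈ R j then sInf {k : ℕ | ∃ h : k < N, ω ∈ R ⟨k, h⟩} else N

/-- Set description of the event `{mhat R = m}`. -/
lemma mhat_eq_iff {Ω : Type*} {N : ℕ} (R : Fin N → Set Ω) (m : ℕ) (hmN : m ≤ N) (ω : Ω) :
    mhat R ω = m ↔
      ω ∈ ⋂ j ∈ Finset.univ.filter (fun j : Fin N => (j : ℕ) ≤ m),
        (if (j : ℕ) < m then (R j)ᶜ else R j) := by
  simp only [Set.mem_iInter, Finset.mem_filter, Finset.mem_univ, true_and]
  unfold mhat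
  constructor
  · intro h j hj
    by_cases hex : ∃ j : Fin N, ω ∈ R j
    · rw [if_pos hex] at h
      have hne : {k : ℕ | ∃ h : k < N, ω ∈ R ⟨k, h⟩}.Nonempty := by
        obtain ⟨i, hi⟩ := hex
        exact ⟨(i : ℕ), ⟨i.isLt, by simpa using hi⟩⟩
      have hmem := Nat.sInf_mem hne
      rw [h] at hmem
      obtain ⟨hmN', hωm⟩ := hmem
      by_cases hjm : (j : ℕ) < m
      · rw [if_pos hjm]
        intro hωj
        have : (j : ℕ) ∈ {k : ℕ | ∃ h : k < N, ω ∈ R ⟨k, h⟩} := ⟨j.isLt, by simpa using hωj⟩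
        have := Nat.sInf_le this
        omega
      · rw [if_neg hjm]
        have hjem : (j : ℕ) = m := by omega
        have : j = ⟨m, hmN'⟩ := Fin.ext hjem
        rw [this]; exact hωm
    · rw [if_neg hex] at h
      have hjm : (j : ℕ) < m := by have := j.isLt; omega
      rw [if_pos hjm]
      exact fun hωj => hex ⟨j, hωj⟩
  · intro h
    by_cases hm : m < N
    · set jm : Fin N := ⟨m, hm⟩
      have hωm : ω ∈ R jm := by
        have := h jm (le_refl m)
        simpa [jm] using this
      have hex : ∃ j : Fin N, ω ∈ R j := ⟨jm, hωm⟩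
      rw [if_pos hex]
      have hmem : m ∈ {k : ℕ | ∃ h : k < N, ω ∈ R ⟨k, h⟩} := ⟨hm, hωm⟩
      refine le_antisymm (Nat.sInf_le hmem) ?_
      by_contra hlt
      push_neg at hlt
      have hsm := Nat.sInf_mem ⟨m, hmem⟩
      obtain ⟨hsN, hωs⟩ := hsm
      have hj := h ⟨sInf {k : ℕ | ∃ h : k < N, ω ∈ R ⟨k, h⟩}, hsN⟩ (by simp; omega)
      rw [if_pos (by simpa using hlt)] at hj
      exact hj hωs
    · have hmN' : m = N := by omega
      have hex : ¬ ∃ j : Fin N, ω ∈ R j := by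
        rintro ⟨j, hj⟩
        have hjm : (j : ℕ) < m := by have := j.isLt; omega
        have := h j (le_of_lt hjm)
        rw [if_pos hjm] at this
        exact this hj
      rw [if_neg hex]; omega

lemma card_filter_lt {N m : ℕ} (hmN : m ≤ N) :
    (Finset.univ.filter (fun j : Fin N => (j : ℕ) < m)).card = m := by
  have : Finset.univ.filter (fun j : Fin N => (j : ℕ) < m)
      = Finset.univ.map (Fin.castLEEmb hmN) := by
    ext j
    simp only [Finset.mem_filter, Finset.mem_univ, true_and]
    constructor
    · intro hj
      refine Finset.mem_map.mpr ⟨⟨(j : ℕ), hj⟩, Finset.mem_univ _, ?_⟩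
      apply Fin.ext; simp
    · intro hj
      obtain ⟨i, -, rfl⟩ := Finset.mem_map.mp hj
      simpa using i.isLt
  rw [this, Finset.card_map, Finset.card_univ, Fintype.card_fin]

theorem bottomup_consistency {N : ℕ} (m : ℕ) (hmN : m ≤ N)
    (Ω : ℕ → Type*) (mΩ : ∀ k, MeasurableSpace (Ω k)) (P : ∀ k, Measure (Ω k))
    (hP : ∀ k, IsProbabilityMeasure (P k))
    (R : ∀ k, Fin N → Set (Ω k)) (hmeas : ∀ k j, MeasurableSet (R k j))
    (hindep : ∀ k, iIndepSet (R k) (P k))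
    (α π : ℕ → ℝ)
    (hα : ∀ k, α k ∈ Set.Icc (0 : ℝ) 1) (hπ : ∀ k, π k ∈ Set.Icc (0 : ℝ) 1)
    (hnull : ∀ k, ∀ j : Fin N, (j : ℕ) + 1 ≤ m → P k (R k j) = ENNReal.ofReal (α k))
    (halt : ∀ k, ∀ j : Fin N, m < (j : ℕ) + 1 → P k (R k j) = ENNReal.ofReal (π k))
    (hα0 : Tendsto α atTop (nhds 0)) (hπ1 : Tendsto π atTop (nhds 1)) :
    Tendsto (fun k => P k {ω | mhat (R k) ω = m}) atTop (nhds 1) := by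
  -- the real-valued limit expression
  set g : ℕ → ℝ := fun k => (1 - α k) ^ m * (if m < N then π k else 1) with hg
  have key : ∀ k, P k {ω | mhat (R k) ω = m} = ENNReal.ofReal (g k) := by
    intro k
    have hset : {ω | mhat (R k) ω = m}
        = ⋂ j ∈ Finset.univ.filter (fun j : Fin N => (j : ℕ) ≤ m),
            (if (j : ℕ) < m then (R k j)ᶜ else R k j) := by
      ext ω; exact mhat_eq_iff (R k) m hmN ω
    have hind := (iIndepSet_iff_iIndep (R k) (P k)).1 (hindep k)
    have hprod := hind.meas_biInter (S := Finset.univ.filter (fun j : Fin N => (j : ℕ) ≤ m))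
      (s := fun j => if (j : ℕ) < m then (R k j)ᶜ else R k j) ?_
    swap
    · intro j _
      by_cases hjm : (j : ℕ) < m
      · rw [if_pos hjm]
        exact (MeasurableSpace.measurableSet_generateFrom
          (show R k j ∈ {R k j} from rfl)).compl
      · rw [if_neg hjm]
        exact MeasurableSpace.measurableSet_generateFrom rfl
    rw [hset, hprod]
    -- compute each factor
    have hfac : ∀ j ∈ Finset.univ.filter (fun j : Fin N => (j : ℕ) ≤ m),
        P k (if (j : ℕ) < m then (R k j)ᶜ else R k j)
          = if (j : ℕ) < m then ENNReal.ofReal (1 - α k) else ENNReal.ofReal (π k) := by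
      intro j hj
      simp only [Finset.mem_filter] at hj
      by_cases hjm : (j : ℕ) < m
      · rw [if_pos hjm, if_pos hjm]
        rw [prob_compl_eq_one_sub (hmeas k j), hnull k j (by omega)]
        rw [ENNReal.ofReal_sub _ (hα k).1, ENNReal.ofReal_one]
      · rw [if_neg hjm, if_neg hjm]
        exact halt k j (by omega)
    rw [Finset.prod_congr rfl hfac]
    -- split the product according to j < m or not
    rw [Finset.prod_ite]
    have h1 : (Finset.filter (fun j : Fin N => (j : ℕ) < m)
        (Finset.filter (fun j : Fin N => (j : ℕ) ≤ m) Finset.univ))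
        = Finset.univ.filter (fun j : Fin N => (j : ℕ) < m) := by
      ext j; simp; omega
    have h2 : (Finset.filter (fun j : Fin N => ¬ (j : ℕ) < m)
        (Finset.filter (fun j : Fin N => (j : ℕ) ≤ m) Finset.univ))
        = if hm : m < N then {(⟨m, hm⟩ : Fin N)} else ∅ := by
      split
      · ext j
        simp only [Finset.mem_filter, Finset.mem_univ, true_and, Finset.mem_singleton,
          Fin.ext_iff]
        omega
      · ext j
        simp only [Finset.mem_filter, Finset.mem_univ, true_and, Finset.notMem_empty,
          iff_false]
        have := j.isLt; omega
    rw [h1, h2, Finset.prod_const, card_filter_lt hmN]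
    have hπ0 : 0 ≤ π k := (hπ k).1
    have hα1 : 0 ≤ 1 - α k := by have := (hα k).2; linarith
    split
    · rw [Finset.prod_singleton, hg]
      simp only [if_pos ‹m < N›]
      rw [ENNReal.ofReal_mul (by positivity), ENNReal.ofReal_pow hα1]
    · rw [Finset.prod_empty, mul_one, hg]
      simp only [if_neg ‹¬ m < N›, mul_one]
      exact (ENNReal.ofReal_pow hα1 m).symm
  simp only [key]
  have hgt : Tendsto g atTop (nhds 1) := by
    have h1 : Tendsto (fun k => (1 - α k) ^ m) atTop (nhds 1) := by
      have := ((tendsto_const_nhds (x := (1:ℝ))).sub hα0).pow m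
      simpa using this
    by_cases hmlt : m < N
    · simp only [hg, if_pos hmlt]
      simpa using h1.mul hπ1
    · simp only [hg, if_neg hmlt, mul_one]
      exact h1
  have := (ENNReal.continuous_ofReal.tendsto 1).comp hgt
  simpa [ENNReal.ofReal_one, Function.comp_def] using this
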